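/- Let n ≥ 1 and let f be a continuous real-valued function on the circle ℝ/2πℤ whose zero set is finite with at most 2n elements. Then the closure of the set {x : f(x) < 0} in ℝ/2πℤ has at most n connected components. -/

import Mathlib

open Set

/-- If `f` is a continuous real-valued function on the circle
`ℝ/2πℤ` whose zero set is finite with at most `2n` elements (`n ≥ 1`), then the
closure of `{x | f x < 0}` has at most `n` connected components. -/
theorem sublevel_closure_components_le
    (n : ℕ) (hn : 1 ≤ n) (f : AddCircle (2 * Real.pi) → ℝ) (hf : Continuous f)
    (hfin : {x : AddCircle (2 * Real.pi) | f x = 0}.Finite)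
    (hcard : {x : AddCircle (2 * Real.pi) | f x = 0}.ncard ≤ 2 * n) :
    Finite (ConnectedComponents
        (closure {x : AddCircle (2 * Real.pi) | f x < 0})) ∧
      Nat.card (ConnectedComponents
        (closure {x : AddCircle (2 * Real.pi) | f x < 0})) ≤ n := by
  classical
  have hp0 : 0 < 2 * Real.pi := by positivity
  haveI : Fact (0 < 2 * Real.pi) := ⟨hp0⟩
  set C : Set (AddCircle (2 * Real.pi)) := closure {x : AddCircle (2 * Real.pi) | f x < 0}
    with hC
  by_cases hCuniv : C = univ
  · haveI : PreconnectedSpace ↥C := Subtype.preconnectedSpace (by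
      rw [hCuniv]; exact isPreconnected_univ)
    haveI hsub : Subsingleton (ConnectedComponents ↥C) := by
      constructor
      intro a b
      obtain ⟨x, rfl⟩ := ConnectedComponents.surjective_coe a
      obtain ⟨y, rfl⟩ := ConnectedComponents.surjective_coe b
      rw [ConnectedComponents.coe_eq_coe, PreconnectedSpace.connectedComponent_eq_univ,
        PreconnectedSpace.connectedComponent_eq_univ]
    refine ⟨Finite.of_subsingleton, le_trans ?_ hn⟩
    have h1 : Nat.card (ConnectedComponents ↥C) ≤ Nat.card PUnit.{1} :=
      Nat.card_le_card_of_injective (fun _ => PUnit.unit.{1}) (fun a b _ => Subsingleton.elim a b)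
    have h2 : Nat.card PUnit.{1} = 1 := by simp [Nat.card_eq_fintype_card]
    rw [h2] at h1
    exact h1
  · obtain ⟨θ, hθ⟩ : ∃ θ, θ ∉ C := by
      by_contra h; push_neg at h; exact hCuniv (eq_univ_of_forall h)
    obtain ⟨t₀, rfl⟩ := QuotientAddGroup.mk_surjective θ
    set g : ℝ → ℝ := fun x => f (x : AddCircle (2 * Real.pi)) with hg
    have hπ : Continuous ((↑) : ℝ → AddCircle (2 * Real.pi)) := continuous_quotient_mk'
    have hgc : Continuous g := by rw [hg]; exact hf.comp hπ
    set V : Set ℝ := {x : ℝ | g x < 0} with hV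
    have hVopen : IsOpen V := isOpen_lt hgc continuous_const
    set W : Set ℝ := ((↑) : ℝ → AddCircle (2 * Real.pi)) ⁻¹' C with hW
    have hWclosed : IsClosed W := isClosed_closure.preimage hπ
    have hWcl : W = closure V := by
      rw [hW, hC]
      exact (QuotientAddGroup.isOpenMap_coe).preimage_closure_eq_closure_preimage hπ _
    have hVW : V ⊆ W := hWcl ▸ subset_closure
    have hWle : ∀ x ∈ W, g x ≤ 0 := by
      intro x hx
      have h1 : C ⊆ {y : AddCircle (2 * Real.pi) | f y ≤ 0} := by
        rw [hC]
        exact closure_minimal (fun y hy => show f y ≤ 0 from le_of_lt hy)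
          (isClosed_le hf continuous_const)
      exact h1 hx
    have ht₀ : t₀ ∉ W := by rw [hW]; exact hθ
    have ht₀' : t₀ + 2 * Real.pi ∉ W := by
      intro h
      apply hθ
      rwa [hW, mem_preimage, AddCircle.coe_add_period] at h
    set D : Set ℝ := W ∩ Icc t₀ (t₀ + 2 * Real.pi) with hD
    have hDclosed : IsClosed D := hWclosed.inter isClosed_Icc
    have hDIoo : D ⊆ Ioo t₀ (t₀ + 2 * Real.pi) := by
      rintro x ⟨hxW, hx1, hx2⟩
      refine ⟨?_, ?_⟩
      · rcases lt_or_eq_of_le hx1 with h | h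
        · exact h
        · rw [← h] at hxW; exact absurd hxW ht₀
      · rcases lt_or_eq_of_le hx2 with h | h
        · exact h
        · rw [h] at hxW; exact absurd hxW ht₀'
    set Zg : Set ℝ := {x : ℝ | x ∈ Ioo t₀ (t₀ + 2 * Real.pi) ∧ g x = 0} with hZg
    have hinj : InjOn ((↑) : ℝ → AddCircle (2 * Real.pi)) (Ioo t₀ (t₀ + 2 * Real.pi)) := by
      intro x hx y hy hxy
      exact (AddCircle.coe_eq_coe_iff_of_mem_Ico (Ioo_subset_Ico_self hx)
        (Ioo_subset_Ico_self hy)).mp hxy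
    have hZgim : ((↑) : ℝ → AddCircle (2 * Real.pi)) '' Zg
        ⊆ {x : AddCircle (2 * Real.pi) | f x = 0} := by
      rintro _ ⟨x, hx, rfl⟩; exact hx.2
    have hZgfin : Zg.Finite :=
      Set.Finite.of_finite_image (hfin.subset hZgim) (hinj.mono (fun x hx => hx.1))
    have hZgcard : Zg.ncard ≤ 2 * n := by
      have h1 : (((↑) : ℝ → AddCircle (2 * Real.pi)) '' Zg).ncard = Zg.ncard :=
        Set.ncard_image_of_injOn (hinj.mono (fun x hx => hx.1))
      rw [← h1]
      exact le_trans (Set.ncard_le_ncard hZgim hfin) hcard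
    -- components of D
    set S : ConnectedComponents ↥D → Set ℝ :=
      fun K => connectedComponentIn D ((Quotient.out K : ↥D) : ℝ) with hS
    have hSfacts : ∀ K : ConnectedComponents ↥D,
        IsCompact (S K) ∧ S K ⊆ D ∧ ((Quotient.out K : ↥D) : ℝ) ∈ S K := by
      intro K
      have hmem : ((Quotient.out K : ↥D) : ℝ) ∈ D := (Quotient.out K).2
      have hsub : S K ⊆ D := connectedComponentIn_subset _ _
      have hclosed : IsClosed (S K) := by
        rw [hS]
        simp only
        rw [connectedComponentIn_eq_image hmem]
        exact hDclosed.isClosedMap_subtype_val _ isClosed_connectedComponent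
      exact ⟨IsCompact.of_isClosed_subset isCompact_Icc hclosed
        (hsub.trans inter_subset_right), hsub, mem_connectedComponentIn hmem⟩
    have hend : ∀ K : ConnectedComponents ↥D,
        g (sInf (S K)) = 0 ∧ g (sSup (S K)) = 0 ∧ sInf (S K) < sSup (S K) := by
      intro K
      obtain ⟨hcomp, hsub, hmemK⟩ := hSfacts K
      have hne : (S K).Nonempty := ⟨_, hmemK⟩
      have haA : sInf (S K) ∈ S K := hcomp.sInf_mem hne
      have hbA : sSup (S K) ∈ S K := hcomp.sSup_mem hne
      set a := sInf (S K) with ha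
      set b := sSup (S K) with hb
      have hAeq : ∀ x ∈ S K, connectedComponentIn D x = S K := by
        intro x hx
        exact (connectedComponentIn_eq hx).symm
      have hgrow : ∀ x ∈ S K, ∀ T : Set ℝ, IsPreconnected T → x ∈ T → T ⊆ D → T ⊆ S K := by
        intro x hx T hT hxT hTD
        have h1 := hT.subset_connectedComponentIn hxT hTD
        rwa [hAeq x hx] at h1
      have hza : g a = 0 := by
        have hle : g a ≤ 0 := hWle a (hsub haA).1
        rcases eq_or_lt_of_le hle with h | h
        · exact h
        exfalso
        have haIoo : a ∈ Ioo t₀ (t₀ + 2 * Real.pi) := hDIoo (hsub haA)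
        have hopen : IsOpen (V ∩ Ioo t₀ (t₀ + 2 * Real.pi)) := hVopen.inter isOpen_Ioo
        obtain ⟨δ, hδ0, hball⟩ := Metric.isOpen_iff.mp hopen a ⟨h, haIoo⟩
        have hsubT : Icc (a - δ/2) a ⊆ D := by
          intro w hw
          have hwb : w ∈ Metric.ball a δ := by
            rw [Metric.mem_ball, Real.dist_eq, abs_sub_lt_iff]
            constructor
            · linarith [hw.1, hw.2]
            · linarith [hw.1, hw.2]
          have hw2 := hball hwb
          exact ⟨hVW hw2.1, Ioo_subset_Icc_self hw2.2⟩
        have hsubA : Icc (a - δ/2) a ⊆ S K :=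
          hgrow a haA _ isPreconnected_Icc ⟨by linarith, le_refl a⟩ hsubT
        have h2 : a - δ/2 ∈ S K := hsubA ⟨le_refl _, by linarith⟩
        have h3 := csInf_le hcomp.bddBelow h2
        rw [← ha] at h3
        linarith
      have hzb : g b = 0 := by
        have hle : g b ≤ 0 := hWle b (hsub hbA).1
        rcases eq_or_lt_of_le hle with h | h
        · exact h
        exfalso
        have hbIoo : b ∈ Ioo t₀ (t₀ + 2 * Real.pi) := hDIoo (hsub hbA)
        have hopen : IsOpen (V ∩ Ioo t₀ (t₀ + 2 * Real.pi)) := hVopen.inter isOpen_Ioo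
        obtain ⟨δ, hδ0, hball⟩ := Metric.isOpen_iff.mp hopen b ⟨h, hbIoo⟩
        have hsubT : Icc b (b + δ/2) ⊆ D := by
          intro w hw
          have hwb : w ∈ Metric.ball b δ := by
            rw [Metric.mem_ball, Real.dist_eq, abs_sub_lt_iff]
            constructor
            · linarith [hw.1, hw.2]
            · linarith [hw.1, hw.2]
          have hw2 := hball hwb
          exact ⟨hVW hw2.1, Ioo_subset_Icc_self hw2.2⟩
        have hsubA : Icc b (b + δ/2) ⊆ S K :=
          hgrow b hbA _ isPreconnected_Icc ⟨le_refl b, by linarith⟩ hsubT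
        have h2 : b + δ/2 ∈ S K := hsubA ⟨by linarith, le_refl _⟩
        have h3 := le_csSup hcomp.bddAbove h2
        rw [← hb] at h3
        linarith
      refine ⟨hza, hzb, ?_⟩
      have hab : a ≤ b := csInf_le_csSup hne hcomp.bddBelow hcomp.bddAbove
      rcases eq_or_lt_of_le hab with heq | hlt
      swap
      · exact hlt
      exfalso
      have hAsub : S K ⊆ {a} := by
        intro x hx
        have h1 := csInf_le hcomp.bddBelow hx
        have h2 := le_csSup hcomp.bddAbove hx
        rw [← ha] at h1
        rw [← hb, ← heq] at h2
        exact mem_singleton_iff.mpr (le_antisymm h2 h1)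
      have haIoo : a ∈ Ioo t₀ (t₀ + 2 * Real.pi) := hDIoo (hsub haA)
      have hZg' : (Zg \ {a}).Finite := hZgfin.diff
      have hcl : IsClosed (Zg \ {a}) := hZg'.isClosed
      have hna : a ∈ (Zg \ {a})ᶜ := by simp
      obtain ⟨ε₂, hε₂0, hb₂⟩ := Metric.isOpen_iff.mp hcl.isOpen_compl a hna
      obtain ⟨ε₁, hε₁0, hb₁⟩ := Metric.isOpen_iff.mp isOpen_Ioo a haIoo
      set ε := min ε₁ ε₂ with hε
      have hε0 : 0 < ε := lt_min hε₁0 hε₂0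
      have hballIoo : Metric.ball a ε ⊆ Ioo t₀ (t₀ + 2 * Real.pi) :=
        (Metric.ball_subset_ball (min_le_left _ _)).trans hb₁
      have hnz : ∀ c ∈ Metric.ball a ε, g c = 0 → c = a := by
        intro c hc hgc0
        by_contra hcne
        have hcz : c ∈ Zg \ {a} := ⟨⟨hballIoo hc, hgc0⟩, hcne⟩
        exact (hb₂ (Metric.ball_subset_ball (min_le_right _ _) hc)) hcz
      have haW : a ∈ closure V := by rw [← hWcl]; exact (hsub haA).1
      obtain ⟨y, hyV, hyd⟩ := Metric.mem_closure_iff.mp haW ε hε0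
      have hyball : y ∈ Metric.ball a ε := by
        rw [Metric.mem_ball, dist_comm]; exact hyd
      have hyIoo : y ∈ Ioo t₀ (t₀ + 2 * Real.pi) := hballIoo hyball
      have hay : |a - y| < ε := by rwa [Real.dist_eq] at hyd
      have hyne : y ≠ a := by
        intro h
        rw [h] at hyV
        have h5 : g a < 0 := hyV
        rw [hza] at h5
        exact lt_irrefl 0 h5
      rcases lt_or_gt_of_ne hyne with hyl | hyg
      · -- y < a
        have hIco : Ico y a ⊆ V := by
          intro w hw
          by_contra hwV
          have hw0 : 0 ≤ g w := not_lt.mp hwV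
          have h0m : (0:ℝ) ∈ Icc (g y) (g w) := ⟨le_of_lt hyV, hw0⟩
          obtain ⟨c, hc, hgc0⟩ := intermediate_value_Icc hw.1 hgc.continuousOn h0m
          have hya : a - y < ε := lt_of_le_of_lt (le_abs_self _) hay
          have hcb : c ∈ Metric.ball a ε := by
            rw [Metric.mem_ball, Real.dist_eq, abs_sub_lt_iff]
            constructor
            · linarith [hc.2, hw.2]
            · linarith [hc.1]
          have hca := hnz c hcb hgc0
          rw [hca] at hc
          linarith [hc.2, hw.2]
        have hIccD : Icc y a ⊆ D := by
          intro w hw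
          rcases eq_or_lt_of_le hw.2 with h | h
          · rw [h]; exact hsub haA
          · have hwV : w ∈ V := hIco ⟨hw.1, h⟩
            exact ⟨hVW hwV, le_of_lt (lt_of_lt_of_le hyIoo.1 hw.1),
              le_of_lt (lt_of_le_of_lt hw.2 haIoo.2)⟩
        have hyA : y ∈ S K :=
          hgrow a haA _ isPreconnected_Icc ⟨le_of_lt hyl, le_refl a⟩ hIccD
            ⟨le_refl y, le_of_lt hyl⟩
        have h6 := hAsub hyA
        rw [mem_singleton_iff] at h6
        exact hyne h6
      · -- a < y
        have hIoc : Ioc a y ⊆ V := by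
          intro w hw
          by_contra hwV
          have hw0 : 0 ≤ g w := not_lt.mp hwV
          have h0m : (0:ℝ) ∈ Icc (g y) (g w) := ⟨le_of_lt hyV, hw0⟩
          obtain ⟨c, hc, hgc0⟩ := intermediate_value_Icc' hw.2 hgc.continuousOn h0m
          have hya : y - a < ε :=
            lt_of_le_of_lt (le_abs_self _) (by rwa [abs_sub_comm] at hay)
          have hcb : c ∈ Metric.ball a ε := by
            rw [Metric.mem_ball, Real.dist_eq, abs_sub_lt_iff]
            constructor
            · linarith [hc.2]
            · linarith [hc.1, hw.1]
          have hca := hnz c hcb hgc0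
          rw [hca] at hc
          linarith [hc.1, hw.1]
        have hIccD : Icc a y ⊆ D := by
          intro w hw
          rcases eq_or_lt_of_le hw.1 with h | h
          · rw [← h]; exact hsub haA
          · have hwV : w ∈ V := hIoc ⟨h, hw.2⟩
            exact ⟨hVW hwV, le_of_lt (lt_of_lt_of_le haIoo.1 hw.1),
              le_of_lt (lt_of_le_of_lt hw.2 hyIoo.2)⟩
        have hyA : y ∈ S K :=
          hgrow a haA _ isPreconnected_Icc ⟨le_refl a, le_of_lt hyg⟩ hIccD
            ⟨le_of_lt hyg, le_refl y⟩
        have h6 := hAsub hyA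
        rw [mem_singleton_iff] at h6
        exact hyne h6
    have hABmem : ∀ K : ConnectedComponents ↥D, sInf (S K) ∈ S K ∧ sSup (S K) ∈ S K := by
      intro K
      obtain ⟨hcomp, hsub, hmemK⟩ := hSfacts K
      exact ⟨hcomp.sInf_mem ⟨_, hmemK⟩, hcomp.sSup_mem ⟨_, hmemK⟩⟩
    have hmemZg : ∀ K : ConnectedComponents ↥D, sInf (S K) ∈ Zg ∧ sSup (S K) ∈ Zg := by
      intro K
      obtain ⟨hcomp, hsub, hmemK⟩ := hSfacts K
      obtain ⟨h1, h2, h3⟩ := hend K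
      obtain ⟨ha, hb⟩ := hABmem K
      exact ⟨⟨hDIoo (hsub ha), h1⟩, ⟨hDIoo (hsub hb), h2⟩⟩
    have hdisj : ∀ K K' : ConnectedComponents ↥D, (S K ∩ S K').Nonempty → K = K' := by
      rintro K K' ⟨z, hzK, hzK'⟩
      have h1 : connectedComponentIn D ((Quotient.out K : ↥D) : ℝ)
          = connectedComponentIn D z := connectedComponentIn_eq hzK
      have h2 : connectedComponentIn D ((Quotient.out K' : ↥D) : ℝ)
          = connectedComponentIn D z := connectedComponentIn_eq hzK'
      have hSS : connectedComponentIn D ((Quotient.out K : ↥D) : ℝ)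
          = connectedComponentIn D ((Quotient.out K' : ↥D) : ℝ) := h1.trans h2.symm
      have hK : ((Quotient.out K : ↥D) : ℝ) ∈ D := (Quotient.out K).2
      have hK' : ((Quotient.out K' : ↥D) : ℝ) ∈ D := (Quotient.out K').2
      have himg : (Subtype.val '' connectedComponent (Quotient.out K) : Set ℝ)
          = Subtype.val '' connectedComponent (Quotient.out K') := by
        rw [← connectedComponentIn_eq_image hK, ← connectedComponentIn_eq_image hK']
        exact hSS
      have hcc : connectedComponent (Quotient.out K) = connectedComponent (Quotient.out K') :=
        (Set.image_injective.mpr Subtype.val_injective) himg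
      have e1 : ((Quotient.out K : ↥D) : ConnectedComponents ↥D) = K := Quotient.out_eq' K
      have e2 : ((Quotient.out K' : ↥D) : ConnectedComponents ↥D) = K' := Quotient.out_eq' K'
      rw [← e1, ← e2, ConnectedComponents.coe_eq_coe]
      exact hcc
    set ψ : ConnectedComponents ↥D × Bool → ↥Zg :=
      fun z => if z.2 = true then ⟨sSup (S z.1), (hmemZg z.1).2⟩
        else ⟨sInf (S z.1), (hmemZg z.1).1⟩ with hψ
    have hψS : ∀ z : ConnectedComponents ↥D × Bool, ((ψ z : ℝ)) ∈ S z.1 := by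
      rintro ⟨K, i⟩
      cases i
      · simp only [hψ, Bool.false_eq_true, if_false]
        exact (hABmem K).1
      · simp only [hψ, if_true]
        exact (hABmem K).2
    have hψinj : Function.Injective ψ := by
      rintro ⟨K, i⟩ ⟨K', j⟩ h
      have hv : ((ψ (K, i) : ℝ)) = ((ψ (K', j) : ℝ)) := congrArg Subtype.val h
      have hKK' : K = K' := hdisj K K' ⟨_, hψS (K, i), hv ▸ hψS (K', j)⟩
      subst hKK'
      have hlt := (hend K).2.2
      have hij : i = j := by
        cases i <;> cases j
        · rfl
        · exfalso
          simp only [hψ, Bool.false_eq_true, if_false, if_true] at hv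
          exact absurd hv (ne_of_lt hlt)
        · exfalso
          simp only [hψ, Bool.false_eq_true, if_false, if_true] at hv
          exact absurd hv.symm (ne_of_lt hlt)
        · rfl
      rw [hij]
    haveI : Finite ↥Zg := hZgfin.to_subtype
    haveI hFinP : Finite (ConnectedComponents ↥D × Bool) := Finite.of_injective ψ hψinj
    haveI hFinD : Finite (ConnectedComponents ↥D) := Finite.prod_left Bool
    have hcard2 : Nat.card (ConnectedComponents ↥D × Bool) ≤ Nat.card ↥Zg :=
      Nat.card_le_card_of_injective ψ hψinj
    rw [Nat.card_prod] at hcard2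
    have hb2 : Nat.card Bool = 2 := by simp [Nat.card_eq_fintype_card]
    have hZc : Nat.card ↥Zg = Zg.ncard := Nat.card_coe_set_eq Zg
    have hmn : Nat.card (ConnectedComponents ↥D) ≤ n := by
      rw [hb2, hZc] at hcard2
      omega
    -- transfer to C
    have hπD : ∀ x : ↥D, ((x : ℝ) : AddCircle (2 * Real.pi)) ∈ C := fun x => x.2.1
    set pm : ↥D → ↥C := fun x => ⟨_, hπD x⟩ with hpm
    have hpmc : Continuous pm := Continuous.subtype_mk (hπ.comp continuous_subtype_val) _
    set F : ConnectedComponents ↥D → ConnectedComponents ↥C :=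
      fun K => ConnectedComponents.mk (pm (Quotient.out K)) with hF
    have hFsurj : Function.Surjective F := by
      intro L
      obtain ⟨y, rfl⟩ := ConnectedComponents.surjective_coe L
      set s := AddCircle.equivIco (2 * Real.pi) t₀ (y : AddCircle (2 * Real.pi)) with hs
      have hs1 : ((s : ℝ) : AddCircle (2 * Real.pi)) = (y : AddCircle (2 * Real.pi)) :=
        (AddCircle.equivIco (2 * Real.pi) t₀).symm_apply_apply _
      have hsD : (s : ℝ) ∈ D := by
        refine ⟨?_, Ico_subset_Icc_self s.2⟩
        rw [hW, mem_preimage, hs1]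
        exact y.2
      refine ⟨ConnectedComponents.mk ⟨(s : ℝ), hsD⟩, ?_⟩
      have hout : ((Quotient.out (ConnectedComponents.mk (⟨(s : ℝ), hsD⟩ : ↥D)) : ↥D) :
          ConnectedComponents ↥D) = ConnectedComponents.mk (⟨(s : ℝ), hsD⟩ : ↥D) :=
        Quotient.out_eq' _
      have hcc := ConnectedComponents.coe_eq_coe.mp hout
      have hmem2 : Quotient.out (ConnectedComponents.mk (⟨(s : ℝ), hsD⟩ : ↥D))
          ∈ connectedComponent (⟨(s : ℝ), hsD⟩ : ↥D) := by
        rw [← hcc]; exact mem_connectedComponent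
      have hpmem : pm (Quotient.out (ConnectedComponents.mk (⟨(s : ℝ), hsD⟩ : ↥D)))
          ∈ connectedComponent (pm (⟨(s : ℝ), hsD⟩ : ↥D)) :=
        hpmc.image_connectedComponent_subset _ ⟨_, hmem2, rfl⟩
      have hfin2 : F (ConnectedComponents.mk (⟨(s : ℝ), hsD⟩ : ↥D))
          = ConnectedComponents.mk (pm (⟨(s : ℝ), hsD⟩ : ↥D)) :=
        ConnectedComponents.coe_eq_coe'.mpr hpmem
      rw [hfin2]
      have hy : pm (⟨(s : ℝ), hsD⟩ : ↥D) = y := Subtype.ext hs1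
      rw [hy]
    have hfinal : Nat.card (ConnectedComponents ↥C) ≤ Nat.card (ConnectedComponents ↥D) :=
      Nat.card_le_card_of_surjective F hFsurj
    exact ⟨Finite.of_surjective F hFsurj, le_trans hfinal hmn⟩
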